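/- The combination of two reflections is a rotation by twice the angle between the reflection normals: for unit vectors a, b of the Euclidean plane and every vector x of the plane, in Cl(2,0) one has ι(b) * ι(a) * ι(x) * ι(a) * ι(b) = ι(R x), where R is the rotation of the plane by the angle 2·θ and θ is the oriented angle from a to b (with respect to the standard orientation of the plane). -/

import Mathlib

open scoped RealInnerProductSpace

/-- The quadratic form `Q v = ‖v‖²` on a real inner product space. -/
noncomputable def normSqQF (E : Type*) [NormedAddCommGroup E] [InnerProductSpace ℝ E] :
    QuadraticForm ℝ E where
  toFun v := ‖v‖ ^ 2
  toFun_smul a v := by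
    simp only [norm_smul, mul_pow, Real.norm_eq_abs, sq_abs, smul_eq_mul]; ring
  exists_companion' :=
    ⟨(2 : ℝ) • innerₗ E, fun x y => by
      simp [innerₗ_apply_apply, norm_add_sq_real]; ring⟩

/-- `Cl(2,0)`: the quadratic form on the Euclidean plane. -/
noncomputable def Q₂ : QuadraticForm ℝ (EuclideanSpace ℝ (Fin 2)) :=
  normSqQF (EuclideanSpace ℝ (Fin 2))

noncomputable def ι₂ : EuclideanSpace ℝ (Fin 2) →ₗ[ℝ] CliffordAlgebra Q₂ :=
  CliffordAlgebra.ι Q₂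

/-- standard basis vectors of the plane -/
noncomputable def e₁ : EuclideanSpace ℝ (Fin 2) := EuclideanSpace.single 0 1
noncomputable def e₂ : EuclideanSpace ℝ (Fin 2) := EuclideanSpace.single 1 1


instance : Fact (Module.finrank ℝ (EuclideanSpace ℝ (Fin 2)) = 2) :=
  ⟨finrank_euclideanSpace_fin⟩

/-- The standard orientation of the Euclidean plane. -/
noncomputable def stdOrientation : Orientation ℝ (EuclideanSpace ℝ (Fin 2)) (Fin 2) :=
  (EuclideanSpace.basisFun (Fin 2) ℝ).toBasis.orientation

lemma Q₂_apply (v : EuclideanSpace ℝ (Fin 2)) : Q₂ v = ‖v‖ ^ 2 := rfl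

lemma polar_Q₂ (u x : EuclideanSpace ℝ (Fin 2)) :
    QuadraticMap.polar Q₂ u x = 2 * ⟪u, x⟫ := by
  simp only [QuadraticMap.polar, Q₂_apply, norm_add_sq_real]
  ring

lemma reflect_clifford (u x : EuclideanSpace ℝ (Fin 2)) (hu : ‖u‖ = 1) :
    ι₂ u * ι₂ x * ι₂ u = ι₂ ((2 * ⟪u, x⟫) • u - x) := by
  have h2 : ι₂ u * ι₂ u = algebraMap ℝ _ (Q₂ u) := CliffordAlgebra.ι_sq_scalar Q₂ u
  rw [Q₂_apply, hu] at h2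
  calc ι₂ u * ι₂ x * ι₂ u
      = (algebraMap ℝ _ (QuadraticMap.polar Q₂ u x) - ι₂ x * ι₂ u) * ι₂ u := by
        show ι₂ u * ι₂ x * ι₂ u = _
        rw [show ι₂ u * ι₂ x = CliffordAlgebra.ι Q₂ u * CliffordAlgebra.ι Q₂ x from rfl,
          CliffordAlgebra.ι_mul_ι_comm]
        rfl
    _ = algebraMap ℝ _ (2 * ⟪u, x⟫) * ι₂ u - ι₂ x * (ι₂ u * ι₂ u) := by
        rw [polar_Q₂]; noncomm_ring
    _ = (2 * ⟪u, x⟫) • ι₂ u - ι₂ x := by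
        rw [h2, Algebra.smul_def]; simp
    _ = ι₂ ((2 * ⟪u, x⟫) • u - x) := by rw [map_sub, map_smul]

lemma sin_oangle_unit (a b : EuclideanSpace ℝ (Fin 2)) (ha : ‖a‖ = 1) (hb : ‖b‖ = 1) :
    Real.Angle.sin (stdOrientation.oangle a b) = stdOrientation.areaForm a b := by
  have hane : a ≠ 0 := fun h => by simp [h] at ha
  have hbne : b ≠ 0 := fun h => by simp [h] at hb
  rw [Orientation.oangle, Real.Angle.sin_coe, Complex.sin_arg]
  rw [stdOrientation.norm_kahler, ha, hb, Orientation.kahler_apply_apply]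
  simp

lemma key_vector (a b x : EuclideanSpace ℝ (Fin 2)) (ha : ‖a‖ = 1) (hb : ‖b‖ = 1) :
    (2 * ⟪b, (2 * ⟪a, x⟫) • a - x⟫) • b - ((2 * ⟪a, x⟫) • a - x) =
      stdOrientation.rotation ((2 : ℤ) • stdOrientation.oangle a b) x := by
  set o := stdOrientation
  have hc : Real.Angle.cos (o.oangle a b) = ⟪a, b⟫ := by
    rw [o.inner_eq_norm_mul_norm_mul_cos_oangle a b, ha, hb]; ring
  have hs := sin_oangle_unit a b ha hb
  rw [two_zsmul, ← o.rotation_rotation, o.rotation_apply, o.rotation_apply, hc, hs]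
  apply ext_inner_left ℝ
  intro y
  have h1 := o.inner_mul_inner_add_areaForm_mul_areaForm a x y
  have h2 := o.inner_mul_areaForm_sub a x y
  have h3 := o.inner_mul_inner_add_areaForm_mul_areaForm a b y
  have h4 := o.inner_mul_inner_add_areaForm_mul_areaForm a b x
  have h5 := o.inner_mul_areaForm_sub a b x
  have h6 := o.inner_sq_add_areaForm_sq a b
  simp only [ha, hb, one_pow, one_mul] at h1 h2 h3 h4 h5 h6
  simp only [map_add, map_smul, Orientation.rightAngleRotation_rightAngleRotation,
    inner_sub_right, inner_smul_right, inner_add_right, inner_neg_right,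
    Orientation.inner_rightAngleRotation_right, smul_neg]
  have hyx : ⟪y, x⟫ = ⟪a, x⟫ * ⟪a, y⟫ + o.areaForm a x * o.areaForm a y := by
    rw [h1, real_inner_comm]
  have hba : ⟪b, a⟫ = ⟪a, b⟫ := real_inner_comm a b
  have hya : ⟪y, a⟫ = ⟪a, y⟫ := real_inner_comm a y
  have hyb : ⟪y, b⟫ = ⟪b, y⟫ := real_inner_comm b y
  have hwyx : o.areaForm y x = -(o.areaForm x y) := o.areaForm_swap y x
  rw [hba, hya, hyb, hwyx, ← h3, ← h4, hyx, ← h2]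
  linear_combination (⟪a, x⟫ * ⟪a, y⟫ - o.areaForm a x * o.areaForm a y) * h6

theorem two_reflections_eq_rotation (a b : EuclideanSpace ℝ (Fin 2))
    (ha : ‖a‖ = 1) (hb : ‖b‖ = 1) (x : EuclideanSpace ℝ (Fin 2)) :
    ι₂ b * ι₂ a * ι₂ x * ι₂ a * ι₂ b =
      ι₂ (stdOrientation.rotation ((2 : ℤ) • stdOrientation.oangle a b) x) := by
  have step1 : ι₂ b * ι₂ a * ι₂ x * ι₂ a * ι₂ b
      = ι₂ b * (ι₂ a * ι₂ x * ι₂ a) * ι₂ b := by noncomm_ring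
  rw [step1, reflect_clifford a x ha, reflect_clifford b _ hb,
    key_vector a b x ha hb]
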